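/- If D ≡ 3 (mod 4) is a square-free integer greater than 1, then the classical binary quadratic form Q(x,y) = 2x² + 2√D·xy + ((D+1)/2)y² over ℤ[√D] is additively indecomposable: there do not exist classical binary quadratic forms Q₁, Q₂ over ℤ[√D], both totally positive semi-definite and both nonzero, with Q = Q₁ + Q₂. -/
import Mathlib


/-- The two real embeddings of `ℚ(√D)` restricted to `ℤ[√D]`. -/
noncomputable def emb1 (D : ℤ) (x : ℤ√D) : ℝ := x.re + x.im * Real.sqrt D
noncomputable def emb2 (D : ℤ) (x : ℤ√D) : ℝ := x.re - x.im * Real.sqrt D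

/-- The real binary form `a u² + b uv + c v²` is positive semi-definite. -/
def IsPSD (a b c : ℝ) : Prop :=
  ∀ u v : ℝ, 0 ≤ a * u ^ 2 + b * (u * v) + c * v ^ 2

/-- The classical binary quadratic form `a x² + 2 b xy + c y²` over `ℤ[√D]`
is totally positive semi-definite. -/
noncomputable def TotPSD (D : ℤ) (a b c : ℤ√D) : Prop :=
  IsPSD (emb1 D a) (2 * emb1 D b) (emb1 D c) ∧
  IsPSD (emb2 D a) (2 * emb2 D b) (emb2 D c)

lemma psd_facts {A B C : ℝ} (h : IsPSD A B C) : 0 ≤ A ∧ 0 ≤ C ∧ B ^ 2 ≤ 4 * A * C := by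
  have hA := h 1 0
  have hC := h 0 1
  have h1 := h (-B) (2 * A)
  have h2 := h (2 * C) (-B)
  have h3 := h 1 1
  have h4 := h 1 (-1)
  have hA' : 0 ≤ A := by nlinarith
  have hC' : 0 ≤ C := by nlinarith
  refine ⟨hA', hC', ?_⟩
  rcases lt_or_eq_of_le hA' with hA0 | hA0
  · nlinarith
  rcases lt_or_eq_of_le hC' with hC0 | hC0
  · nlinarith
  · nlinarith

lemma tot_nonneg {D : ℤ} (hD : (0:ℤ) ≤ D) {x : ℤ√D}
    (h1 : 0 ≤ emb1 D x) (h2 : 0 ≤ emb2 D x) :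
    0 ≤ x.re ∧ x.im ^ 2 * D ≤ x.re ^ 2 := by
  have hs2 : Real.sqrt D ^ 2 = (D:ℝ) := Real.sq_sqrt (by exact_mod_cast hD)
  unfold emb1 at h1
  unfold emb2 at h2
  constructor
  · have hre : (0:ℝ) ≤ (x.re : ℝ) := by linarith
    exact_mod_cast hre
  · have hm : (0:ℝ) ≤ ((x.re:ℝ) + x.im * Real.sqrt D) * ((x.re:ℝ) - x.im * Real.sqrt D) :=
      mul_nonneg h1 h2
    have : ((x.im:ℝ)) ^ 2 * (D:ℝ) ≤ ((x.re:ℝ)) ^ 2 := by nlinarith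
    exact_mod_cast this


lemma two_le_of (p q d : ℤ) (h0 : 0 ≤ p) (hd : 3 ≤ d) (hq : q ≠ 0) (hsq : q ^ 2 * d ≤ p ^ 2) :
    2 ≤ p := by
  have h1 : 1 ≤ q ^ 2 := by rcases lt_or_gt_of_ne hq with h | h <;> nlinarith
  nlinarith

set_option maxHeartbeats 4000000 in
/-- For `D ≡ 3 (mod 4)` squarefree, `D > 1`, the classical form
`Q(x,y) = 2x² + 2√D·xy + ((D+1)/2)y²` over `ℤ[√D]` is additively indecomposable:
it is not the sum of two nonzero totally positive semi-definite classical forms. -/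
theorem stmt1 (D : ℤ) (hsf : Squarefree D) (h1 : 1 < D) (h3 : D % 4 = 3) :
    ¬ ∃ a₁ b₁ c₁ a₂ b₂ c₂ : ℤ√D,
      TotPSD D a₁ b₁ c₁ ∧ TotPSD D a₂ b₂ c₂ ∧
      ¬(a₁ = 0 ∧ b₁ = 0 ∧ c₁ = 0) ∧ ¬(a₂ = 0 ∧ b₂ = 0 ∧ c₂ = 0) ∧
      a₁ + a₂ = 2 ∧ b₁ + b₂ = ⟨0, 1⟩ ∧ c₁ + c₂ = ⟨(D + 1) / 2, 0⟩ := by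
  rintro ⟨a₁, b₁, c₁, a₂, b₂, c₂, ⟨hP1a, hP1b⟩, ⟨hP2a, hP2b⟩, hn1, hn2, ha, hb, hc⟩
  have hD3 : 3 ≤ D := by omega
  have hD0 : (0:ℤ) ≤ D := by omega
  set s := Real.sqrt D with hsdef
  have hs0 : 0 ≤ s := Real.sqrt_nonneg _
  have hs2 : s ^ 2 = (D:ℝ) := Real.sq_sqrt (by exact_mod_cast hD0)
  have hsp : 0 < s := Real.sqrt_pos.mpr (by exact_mod_cast (by omega : (0:ℤ) < D))
  -- component equations
  have hare : a₁.re + a₂.re = 2 := by have := congrArg Zsqrtd.re ha; simpa using this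
  have haim : a₁.im + a₂.im = 0 := by have := congrArg Zsqrtd.im ha; simpa using this
  have hbre : b₁.re + b₂.re = 0 := by have := congrArg Zsqrtd.re hb; simpa using this
  have hbim : b₁.im + b₂.im = 1 := by have := congrArg Zsqrtd.im hb; simpa using this
  have hcre : c₁.re + c₂.re = (D + 1) / 2 := by have := congrArg Zsqrtd.re hc; simpa using this
  have hcim : c₁.im + c₂.im = 0 := by have := congrArg Zsqrtd.im hc; simpa using this
  have hm : (D + 1) / 2 * 2 = D + 1 := by omega
  -- PSD facts
  obtain ⟨hA11, hC11, hdet11⟩ := psd_facts hP1a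
  obtain ⟨hA12, hC12, hdet12⟩ := psd_facts hP1b
  obtain ⟨hA21, hC21, hdet21⟩ := psd_facts hP2a
  obtain ⟨hA22, hC22, hdet22⟩ := psd_facts hP2b
  -- totally nonneg facts for a's and c's
  obtain ⟨ha1re, ha1sq⟩ := tot_nonneg hD0 hA11 hA12
  obtain ⟨ha2re, ha2sq⟩ := tot_nonneg hD0 hA21 hA22
  obtain ⟨hc1re, hc1sq⟩ := tot_nonneg hD0 hC11 hC12
  obtain ⟨hc2re, hc2sq⟩ := tot_nonneg hD0 hC21 hC22
  clear hP1a hP1b hP2a hP2b hsf ha hb hc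
  -- a's have zero imaginary part
  have hq : a₁.im = 0 := by
    by_contra hq
    have h1' := two_le_of a₁.re a₁.im D ha1re hD3 hq ha1sq
    have h2' := two_le_of a₂.re a₂.im D ha2re hD3 (by omega) ha2sq
    omega
  have hq2 : a₂.im = 0 := by omega
  unfold emb1 at hA11 hC11 hdet11 hA21 hC21 hdet21
  unfold emb2 at hA12 hC12 hdet12 hA22 hC22 hdet22
  -- case analysis on a₁.re
  rcases (by omega : a₁.re = 0 ∧ a₂.re = 2 ∨ a₁.re = 1 ∧ a₂.re = 1 ∨ a₁.re = 2 ∧ a₂.re = 0)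
    with ⟨hp1, hp2⟩ | ⟨hp1, hp2⟩ | ⟨hp1, hp2⟩
  · -- a₁ = 0, so b₁ = 0, then c₁ = 0, contradicting hn1
    rw [hp1, hq] at hdet11 hdet12
    simp at hdet11 hdet12
    have hb1a : (b₁.re : ℝ) + b₁.im * s = 0 := by nlinarith
    have hb1b : (b₁.re : ℝ) - b₁.im * s = 0 := by nlinarith
    have hb1re : b₁.re = 0 := by
      have : (b₁.re : ℝ) = 0 := by linarith
      exact_mod_cast this
    have hb1im : b₁.im = 0 := by
      have : (b₁.im : ℝ) * s = 0 := by linarith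
      have := (mul_eq_zero.mp this).resolve_right (ne_of_gt hsp)
      exact_mod_cast this
    have hb2re : b₂.re = 0 := by omega
    have hb2im : b₂.im = 1 := by omega
    rw [hp2, hq2, hb2re, hb2im] at hdet21 hdet22
    push_cast at hdet21 hdet22
    -- (2s)^2 ≤ 4*2*(c₂.re ± c₂.im s)
    have hsum : (D : ℝ) ≤ 2 * c₂.re := by nlinarith
    have hsum' : D ≤ 2 * c₂.re := by exact_mod_cast hsum
    have hc1re0 : c₁.re = 0 := by omega
    have hc1im0 : c₁.im = 0 := by nlinarith
    exact hn1 ⟨Zsqrtd.ext (by simpa using hp1) (by simpa using hq),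
      Zsqrtd.ext (by simpa using hb1re) (by simpa using hb1im),
      Zsqrtd.ext (by simpa using hc1re0) (by simpa using hc1im0)⟩
  · -- a₁ = a₂ = 1 : impossible
    rw [hp1, hq] at hdet11 hdet12
    rw [hp2, hq2] at hdet21 hdet22
    push_cast at hdet11 hdet12 hdet21 hdet22
    have key : 2 * (b₁.re:ℝ) ^ 2 + 2 * (b₁.im:ℝ) ^ 2 * D +
        2 * (b₂.re:ℝ) ^ 2 + 2 * (b₂.im:ℝ) ^ 2 * D ≤ 2 * (c₁.re:ℝ) + 2 * (c₂.re:ℝ) := by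
      nlinarith
    have keyZ : 2 * b₁.re ^ 2 + 2 * b₁.im ^ 2 * D + 2 * b₂.re ^ 2 + 2 * b₂.im ^ 2 * D
        ≤ 2 * c₁.re + 2 * c₂.re := by exact_mod_cast key
    have hcsum : 2 * c₁.re + 2 * c₂.re = D + 1 := by omega
    have htsq : 1 ≤ b₁.im ^ 2 + b₂.im ^ 2 := by nlinarith [sq_nonneg (b₁.im - b₂.im)]
    nlinarith [sq_nonneg b₁.re, sq_nonneg b₂.re,
      mul_le_mul_of_nonneg_left htsq (by omega : (0:ℤ) ≤ 2 * D)]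
  · -- a₂ = 0, symmetric to first case
    rw [hp2, hq2] at hdet21 hdet22
    simp at hdet21 hdet22
    have hb2a : (b₂.re : ℝ) + b₂.im * s = 0 := by nlinarith
    have hb2b : (b₂.re : ℝ) - b₂.im * s = 0 := by nlinarith
    have hb2re : b₂.re = 0 := by
      have : (b₂.re : ℝ) = 0 := by linarith
      exact_mod_cast this
    have hb2im : b₂.im = 0 := by
      have : (b₂.im : ℝ) * s = 0 := by linarith
      have := (mul_eq_zero.mp this).resolve_right (ne_of_gt hsp)
      exact_mod_cast this
    have hb1re : b₁.re = 0 := by omega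
    have hb1im : b₁.im = 1 := by omega
    rw [hp1, hq, hb1re, hb1im] at hdet11 hdet12
    push_cast at hdet11 hdet12
    have hsum : (D : ℝ) ≤ 2 * c₁.re := by nlinarith
    have hsum' : D ≤ 2 * c₁.re := by exact_mod_cast hsum
    have hc2re0 : c₂.re = 0 := by omega
    have hc2im0 : c₂.im = 0 := by nlinarith
    exact hn2 ⟨Zsqrtd.ext (by simpa using hp2) (by simpa using hq2),
      Zsqrtd.ext (by simpa using hb2re) (by simpa using hb2im),
      Zsqrtd.ext (by simpa using hc2re0) (by simpa using hc2im0)⟩
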